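/- arXiv:math/0209041 — 3 statements merged into one kernel-verified Lean document; each statement's English description precedes it below -/
import Mathlib

section
/- Topological free entropy is upper semicontinuous with respect to convergence in norm-distribution: let a₁^{(p)},…,aₙ^{(p)} be self-adjoint elements of unital C*-algebras A_p (p ∈ ℕ) and a₁,…,aₙ self-adjoint elements of a unital C*-algebra A, and suppose that for every noncommutative polynomial P ∈ ℂ⟨X₁,…,Xₙ⟩ one has lim_{p→∞} ‖P(a₁^{(p)},…,aₙ^{(p)})‖ = ‖P(a₁,…,aₙ)‖. Then limsup_{p→∞} χ_top(a₁^{(p)},…,aₙ^{(p)}) ≤ χ_top(a₁,…,aₙ). -/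
open scoped ComplexOrder
open Matrix MeasureTheory Filter
open scoped ENNReal NNReal
noncomputable section

/-! ### Self-adjoint matrices as a real Hilbert space with ⟪A,B⟫ = Re Tr(AB) -/

/-- The space of `k × k` complex matrices. -/
abbrev Mat (k : ℕ) : Type := Matrix (Fin k) (Fin k) ℂ

/-- The operator norm of a `k × k` complex matrix (the norm of the induced operator on `ℓ²`). -/
def opNorm {k : ℕ} (M : Mat k) : ℝ := ‖Matrix.toEuclideanCLM (𝕜 := ℂ) M‖

/-- Self-adjoint `k × k` complex matrices, as a standalone type. -/
@[ext] structure SA (k : ℕ) : Type where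
  val : Mat k
  isSA : star val = val

namespace SA
variable {k : ℕ}

lemma val_injective : Function.Injective (SA.val (k := k)) := by
  rintro ⟨a, _⟩ ⟨b, _⟩ h
  cases h; rfl

instance : Zero (SA k) := ⟨⟨0, star_zero _⟩⟩
instance : Add (SA k) := ⟨fun A B => ⟨A.val + B.val, by rw [star_add, A.isSA, B.isSA]⟩⟩
instance : Neg (SA k) := ⟨fun A => ⟨-A.val, by rw [star_neg, A.isSA]⟩⟩
instance : Sub (SA k) := ⟨fun A B => ⟨A.val - B.val, by rw [star_sub, A.isSA, B.isSA]⟩⟩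
instance : SMul ℕ (SA k) := ⟨fun n A => ⟨n • A.val, by rw [star_nsmul, A.isSA]⟩⟩
instance : SMul ℤ (SA k) := ⟨fun n A => ⟨n • A.val, by rw [star_zsmul, A.isSA]⟩⟩
instance : SMul ℝ (SA k) :=
  ⟨fun r A => ⟨r • A.val, by rw [star_smul, star_trivial, A.isSA]⟩⟩

instance : AddCommGroup (SA k) :=
  val_injective.addCommGroup SA.val rfl (fun _ _ => rfl) (fun _ => rfl) (fun _ _ => rfl)
    (fun _ _ => rfl) (fun _ _ => rfl)

instance : Module ℝ (SA k) :=
  val_injective.module ℝ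
    { toFun := SA.val, map_zero' := rfl, map_add' := fun _ _ => rfl } (fun _ _ => rfl)

lemma trace_sq (A : SA k) :
    Matrix.trace (A.val * A.val) = ((∑ i, ∑ j, Complex.normSq (A.val j i) : ℝ) : ℂ) := by
  have hA : A.valᴴ = A.val := A.isSA
  rw [show A.val * A.val = A.valᴴ * A.val by rw [hA]]
  push_cast
  simp [Matrix.trace, Matrix.diag, Matrix.mul_apply, Matrix.conjTranspose_apply,
    Complex.star_def, ← Complex.normSq_eq_conj_mul_self]

/-- The real inner product ⟪A,B⟫ = Re Tr(AB) on self-adjoint matrices. -/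
def core (k : ℕ) : InnerProductSpace.Core ℝ (SA k) where
  inner A B := (Matrix.trace (A.val * B.val)).re
  conj_inner_symm A B := by simp [Matrix.trace_mul_comm A.val B.val]
  re_inner_nonneg A := by
    show (0:ℝ) ≤ (Matrix.trace (A.val * A.val)).re
    rw [trace_sq]
    simp only [Complex.ofReal_re]
    exact Finset.sum_nonneg fun i _ => Finset.sum_nonneg fun j _ => Complex.normSq_nonneg _
  definite A := by
    intro h
    have h2 : (Matrix.trace (A.val * A.val)).re = 0 := h
    rw [trace_sq] at h2
    simp only [Complex.ofReal_re] at h2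
    have hz := (Finset.sum_eq_zero_iff_of_nonneg (fun i _ => Finset.sum_nonneg
      (fun j _ => Complex.normSq_nonneg (A.val j i)))).mp h2
    have : A.val = 0 := by
      ext i j
      have := (Finset.sum_eq_zero_iff_of_nonneg
        (fun l _ => Complex.normSq_nonneg (A.val l j))).mp (hz j (Finset.mem_univ j)) i
        (Finset.mem_univ i)
      simpa [Complex.normSq_eq_zero] using this
    exact val_injective this
  add_left A B C := by
    show (Matrix.trace ((A.val + B.val) * C.val)).re = _
    simp [add_mul, Matrix.trace_add]
  smul_left A B r := by
    show (Matrix.trace ((r • A.val) * B.val)).re = _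
    simp [smul_mul_assoc, Matrix.trace_smul]

instance : NormedAddCommGroup (SA k) := (core k).toNormedAddCommGroup
instance : InnerProductSpace ℝ (SA k) := InnerProductSpace.ofCore (core k).toCore
instance : MeasurableSpace (SA k) := borel _
instance : BorelSpace (SA k) := ⟨rfl⟩
instance : FiniteDimensional ℝ (SA k) :=
  FiniteDimensional.of_injective
    ({ toFun := SA.val, map_add' := fun _ _ => rfl,
       map_smul' := fun _ _ => rfl } : SA k →ₗ[ℝ] Mat k)
    val_injective





end SA
/-! ### Noncommutative polynomials -/

/-- Noncommutative polynomials with complex coefficients in `N` indeterminates. -/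
abbrev NCPoly (N : ℕ) : Type := FreeAlgebra ℂ (Fin N)

/-- Evaluation of a noncommutative polynomial at an `N`-tuple of elements of a
unital complex algebra. -/
def NCPoly.eval {N : ℕ} {B : Type*} [Ring B] [Algebra ℂ B] (P : NCPoly N) (x : Fin N → B) : B :=
  FreeAlgebra.lift ℂ x P

/-- The ordered product `x (w 0) * x (w 1) * ⋯ * x (w (p-1))` of the word `w`. -/
def wordProd {B : Type*} [Monoid B] {N : ℕ} (x : Fin N → B) {p : ℕ} (w : Fin p → Fin N) : B :=
  (List.ofFn fun i => x (w i)).prod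

/-! ### Tracial states -/

section TracialState
variable {A : Type*} [Ring A] [Module ℂ A] [StarRing A]

/-- A tracial state on a unital complex ⋆-algebra: a linear functional `τ` with `τ 1 = 1`,
`τ (x⋆ x) ≥ 0` and `τ (x y) = τ (y x)`. -/
structure IsTracialState (τ : A →ₗ[ℂ] ℂ) : Prop where
  map_one : τ 1 = 1
  nonneg : ∀ x : A, 0 ≤ τ (star x * x)
  mul_comm : ∀ x y : A, τ (x * y) = τ (y * x)

end TracialState

/-! ### Voiculescu's microstates free entropy and free capacity -/

section FreeEntropy
variable {A : Type*} [Ring A] [Module ℂ A] [StarRing A] {n m : ℕ}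

/-- The matricial microstates `Γ_R(a₁,…,aₙ,b₁,…,bₘ; k, l, ε; τ)`: tuples of self-adjoint
`k × k` matrices of operator norm at most `R` such that the normalized trace of every word of
length between `1` and `l` differs by at most `ε` from the corresponding `τ`-moment. -/
def GammaR (R : ℝ) (a : Fin n → A) (b : Fin m → A) (τ : A →ₗ[ℂ] ℂ) (k l : ℕ) (ε : ℝ) :
    Set ((Fin n → SA k) × (Fin m → SA k)) :=
  {CD | (∀ i, opNorm (CD.1 i).val ≤ R) ∧ (∀ j, opNorm (CD.2 j).val ≤ R) ∧
    ∀ (p : ℕ), 1 ≤ p → p ≤ l → ∀ w : Fin p → Fin (n + m),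
      ‖(k : ℂ)⁻¹ *
          Matrix.trace (wordProd (Fin.append (fun i => (CD.1 i).val) fun j => (CD.2 j).val) w)
        - τ (wordProd (Fin.append a b) w)‖ ≤ ε}

/-- The microstates for `a₁,…,aₙ` in the presence of `b₁,…,bₘ`: the projection of
`Γ_R(a₁,…,aₙ,b₁,…,bₘ; k, l, ε; τ)` on the first `n` coordinates. -/
def GammaRPres (R : ℝ) (a : Fin n → A) (b : Fin m → A) (τ : A →ₗ[ℂ] ℂ) (k l : ℕ) (ε : ℝ) :
    Set (Fin n → SA k) :=
  Prod.fst '' GammaR R a b τ k l ε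

/-- Voiculescu's microstates free entropy `χ(a₁,…,aₙ : b₁,…,bₘ; τ)` of `a₁,…,aₙ` in the
presence of `b₁,…,bₘ`, with respect to the tracial state `τ`. -/
def chiPres (a : Fin n → A) (b : Fin m → A) (τ : A →ₗ[ℂ] ℂ) : EReal :=
  ⨆ (R : ℝ) (_ : 0 < R), ⨅ (l : ℕ) (ε : ℝ) (_ : 0 < ε),
    Filter.atTop.limsup fun k : ℕ =>
      (↑(((k : ℝ) ^ 2)⁻¹) : EReal) * ENNReal.log (volume (GammaRPres R a b τ k l ε))
        + (↑((n : ℝ) / 2 * Real.log k) : EReal)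

/-- Voiculescu's microstates free entropy `χ(a₁,…,aₙ; τ)`. -/
def chi (a : Fin n → A) (τ : A →ₗ[ℂ] ℂ) : EReal :=
  chiPres a (fun i : Fin 0 => i.elim0) τ

/-- The free capacity `κ(a₁,…,aₙ : b₁,…,bₘ)` of `a₁,…,aₙ` in the presence of `b₁,…,bₘ`:
the supremum of `χ(a₁,…,aₙ : b₁,…,bₘ; τ)` over all tracial states `τ` of the ambient
algebra. -/
def kappaPres (a : Fin n → A) (b : Fin m → A) : EReal :=
  ⨆ (τ : A →ₗ[ℂ] ℂ) (_ : IsTracialState τ), chiPres a b τ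

/-- The free capacity `κ(a₁,…,aₙ)`. -/
def kappa (a : Fin n → A) : EReal :=
  ⨆ (τ : A →ₗ[ℂ] ℂ) (_ : IsTracialState τ), chi a τ

end FreeEntropy

/-! ### Topological free entropy -/

section TopEntropy
variable {A : Type*} [NormedRing A] [NormedAlgebra ℂ A] [StarRing A] {n m : ℕ}

/-- The norm-microstates `Γ_top(a₁,…,aₙ,b₁,…,bₘ; k, ε, P₁,…,P_r)`: tuples of self-adjoint
`k × k` matrices on which each of the noncommutative polynomials `P j` has operator norm
`ε`-close to its norm at `(a, b)`. -/
def GammaTop (a : Fin n → A) (b : Fin m → A) (k : ℕ) (ε : ℝ) {r : ℕ}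
    (P : Fin r → NCPoly (n + m)) : Set ((Fin n → SA k) × (Fin m → SA k)) :=
  {CD | ∀ j : Fin r,
    |opNorm ((P j).eval (Fin.append (fun i => (CD.1 i).val) fun i => (CD.2 i).val))
      - ‖(P j).eval (Fin.append a b)‖| ≤ ε}

/-- Norm-microstates of `a₁,…,aₙ` in the presence of `b₁,…,bₘ`: the projection of
`Γ_top(a₁,…,aₙ,b₁,…,bₘ; k, ε, P₁,…,P_r)` on the first `n` coordinates. -/
def GammaTopPres (a : Fin n → A) (b : Fin m → A) (k : ℕ) (ε : ℝ) {r : ℕ}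
    (P : Fin r → NCPoly (n + m)) : Set (Fin n → SA k) :=
  Prod.fst '' GammaTop a b k ε P

/-- The topological free entropy `χ_top(a₁,…,aₙ : b₁,…,bₘ)` of `a₁,…,aₙ` in the presence
of `b₁,…,bₘ`. -/
def chiTopPres (a : Fin n → A) (b : Fin m → A) : EReal :=
  ⨅ (ε : ℝ) (_ : 0 < ε) (r : ℕ) (P : Fin r → NCPoly (n + m)),
    Filter.atTop.limsup fun k : ℕ =>
      (↑(((k : ℝ) ^ 2)⁻¹) : EReal) * ENNReal.log (volume (GammaTopPres a b k ε P))
        + (↑((n : ℝ) / 2 * Real.log k) : EReal)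

/-- The topological free entropy `χ_top(a₁,…,aₙ)`. -/
def chiTop (a : Fin n → A) : EReal :=
  chiTopPres a (fun i : Fin 0 => i.elim0)

end TopEntropy
/-! ### Topological free entropy dimension -/

/-- The minimal number of elements of an `ε`-net of `X` for the distance function `d`
(`⊤` if there is no finite `ε`-net). -/
def coveringNumber {α : Type*} (d : α → α → ℝ) (ε : ℝ) (X : Set α) : ℕ∞ :=
  ⨅ (S : Finset α) (_ : ∀ x ∈ X, ∃ s ∈ S, d x s ≤ ε), (S.card : ℕ∞)

/-- The metric on `n`-tuples of `k × k` matrices given by the maximum of the operator norms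
of the differences of the coordinates. -/
def opDist {n k : ℕ} (x y : Fin n → Mat k) : ℝ := ⨆ i, opNorm (x i - y i)

/-- The normalized Hilbert–Schmidt metric
`|(A₁,…,Aₙ)|₂ = k^{-1/2} (Σ_j Tr(A_j²))^{1/2}` on `n`-tuples of `k × k` matrices,
applied to differences. -/
def hsDist {n k : ℕ} (x y : Fin n → Mat k) : ℝ :=
  Real.sqrt ((k : ℝ)⁻¹ * (∑ j, Matrix.trace ((x j - y j) * (x j - y j))).re)

section TopDim
variable {A : Type*} [NormedRing A] [NormedAlgebra ℂ A] [StarRing A] {n m : ℕ}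

/-- The norm-microstates of `a₁,…,aₙ` in the presence of `b₁,…,bₘ`, viewed as a subset of
`(M_k)ⁿ`. -/
def GammaTopPresMat (a : Fin n → A) (b : Fin m → A) (k : ℕ) (ε : ℝ) {r : ℕ}
    (P : Fin r → NCPoly (n + m)) : Set (Fin n → Mat k) :=
  (fun C : Fin n → SA k => fun i => (C i).val) '' GammaTopPres a b k ε P

/-- `D_ε(a₁,…,aₙ : b₁,…,bₘ)`, computed with respect to the family of metrics `d` on tuples
of matrices. -/
def DepsWith (d : ∀ k : ℕ, (Fin n → Mat k) → (Fin n → Mat k) → ℝ)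
    (a : Fin n → A) (b : Fin m → A) (ε : ℝ) : EReal :=
  ⨅ (r : ℕ) (P : Fin r → NCPoly (n + m)),
    Filter.atTop.limsup fun k : ℕ =>
      (↑(((k : ℝ) ^ 2)⁻¹) : EReal) *
        ENNReal.log ((coveringNumber (d k) ε (GammaTopPresMat a b k ε P) : ℕ∞) : ℝ≥0∞)

/-- The topological free entropy dimension computed with respect to the family of metrics
`d` on tuples of matrices: `limsup_{ε→0⁺} D_ε / |log ε|`. -/
def deltaTopWith (d : ∀ k : ℕ, (Fin n → Mat k) → (Fin n → Mat k) → ℝ)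
    (a : Fin n → A) (b : Fin m → A) : EReal :=
  Filter.limsup (fun ε : ℝ => (↑|Real.log ε|⁻¹ : EReal) * DepsWith d a b ε)
    (nhdsWithin 0 (Set.Ioi 0))

/-- The topological free entropy dimension `δ_top(a₁,…,aₙ : b₁,…,bₘ)` (for the operator-norm
metric on tuples of matrices). -/
def deltaTopPres (a : Fin n → A) (b : Fin m → A) : EReal :=
  deltaTopWith (fun _ => opDist) a b

/-- The topological free entropy dimension `δ_top(a₁,…,aₙ)`. -/
def deltaTop (a : Fin n → A) : EReal :=
  deltaTopPres a (fun i : Fin 0 => i.elim0)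

/-! ### Semi-microstates -/

/-- The norm-semi-microstates `Γ_top½(a₁,…,aₙ,b₁,…,bₘ; k, ε, P₁,…,P_r)`: only the one-sided
inequalities `‖P_j(C,D)‖ ≤ ‖P_j(a,b)‖ + ε` are required. -/
def GammaTopHalf (a : Fin n → A) (b : Fin m → A) (k : ℕ) (ε : ℝ) {r : ℕ}
    (P : Fin r → NCPoly (n + m)) : Set ((Fin n → SA k) × (Fin m → SA k)) :=
  {CD | ∀ j : Fin r,
    opNorm ((P j).eval (Fin.append (fun i => (CD.1 i).val) fun i => (CD.2 i).val))
      ≤ ‖(P j).eval (Fin.append a b)‖ + ε}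

/-- Norm-semi-microstates of `a₁,…,aₙ` in the presence of `b₁,…,bₘ`. -/
def GammaTopHalfPres (a : Fin n → A) (b : Fin m → A) (k : ℕ) (ε : ℝ) {r : ℕ}
    (P : Fin r → NCPoly (n + m)) : Set (Fin n → SA k) :=
  Prod.fst '' GammaTopHalf a b k ε P

/-- The topological free entropy `χ_top½(a₁,…,aₙ : b₁,…,bₘ)` defined via
norm-semi-microstates. -/
def chiTopHalfPres (a : Fin n → A) (b : Fin m → A) : EReal :=
  ⨅ (ε : ℝ) (_ : 0 < ε) (r : ℕ) (P : Fin r → NCPoly (n + m)),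
    Filter.atTop.limsup fun k : ℕ =>
      (↑(((k : ℝ) ^ 2)⁻¹) : EReal) * ENNReal.log (volume (GammaTopHalfPres a b k ε P))
        + (↑((n : ℝ) / 2 * Real.log k) : EReal)

end TopDim
private lemma fin_append_elim0 {B : Type*} {N : ℕ} (x : Fin N → B) :
    Fin.append x (fun i : Fin 0 => i.elim0) = x := by
  funext i
  simp [Fin.append_elim0 (α := B) x]

/-- Topological free entropy is upper semicontinuous with respect to
convergence in norm-distribution. -/
theorem chiTop_upperSemicontinuous {A : ℕ → Type*} [∀ p, NormedRing (A p)]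
    [∀ p, NormedAlgebra ℂ (A p)] [∀ p, StarRing (A p)] [∀ p, CStarRing (A p)]
    [∀ p, CompleteSpace (A p)] [∀ p, StarModule ℂ (A p)]
    {B : Type*} [NormedRing B] [NormedAlgebra ℂ B] [StarRing B] [CStarRing B]
    [CompleteSpace B] [StarModule ℂ B] {n : ℕ}
    (a : ∀ p : ℕ, Fin n → A p) (c : Fin n → B)
    (hsa : ∀ p i, IsSelfAdjoint (a p i)) (hc : ∀ i, IsSelfAdjoint (c i))
    (hconv : ∀ P : NCPoly n,
      Filter.Tendsto (fun p : ℕ => ‖P.eval (a p)‖) Filter.atTop (nhds ‖P.eval c‖)) :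
    Filter.atTop.limsup (fun p : ℕ => chiTop (a p)) ≤ chiTop c := by
  simp only [chiTop, chiTopPres]
  refine le_iInf fun ε => le_iInf fun hε => le_iInf fun r => le_iInf fun P => ?_
  have hev : ∀ᶠ p in Filter.atTop, ∀ j : Fin r,
      |‖(P j).eval (a p)‖ - ‖(P j).eval c‖| ≤ ε / 2 := by
    rw [Filter.eventually_all]
    intro j
    obtain ⟨N, hN⟩ := Metric.tendsto_atTop.mp (hconv (P j)) (ε / 2) (half_pos hε)
    refine Filter.eventually_atTop.mpr ⟨N, fun p hp => ?_⟩
    have := hN p hp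
    rw [Real.dist_eq] at this
    exact this.le
  refine Filter.limsup_le_of_le ?_ ?_
  · isBoundedDefault
  filter_upwards [hev] with p hp
  refine le_trans (iInf_le_of_le (ε / 2) (iInf_le_of_le (half_pos hε)
    (iInf_le_of_le r (iInf_le _ P)))) ?_
  refine Filter.limsup_le_limsup (Filter.Eventually.of_forall fun k => ?_) ?_ ?_
  · have hsub : GammaTopPres (a p) (fun i : Fin 0 => i.elim0) k (ε / 2) P ⊆
        GammaTopPres c (fun i : Fin 0 => i.elim0) k ε P := by
      apply Set.image_mono
      intro CD hCD j
      have h1 := hCD j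
      have h2 := hp j
      rw [fin_append_elim0 (a p)] at h1
      rw [fin_append_elim0 c]
      calc |opNorm ((P j).eval (Fin.append (fun i => (CD.1 i).val) fun i => (CD.2 i).val))
            - ‖(P j).eval c‖|
          ≤ |opNorm ((P j).eval (Fin.append (fun i => (CD.1 i).val) fun i => (CD.2 i).val))
            - ‖(P j).eval (a p)‖| + |‖(P j).eval (a p)‖ - ‖(P j).eval c‖| := abs_sub_le _ _ _
        _ ≤ ε / 2 + ε / 2 := add_le_add h1 h2
        _ = ε := by ring
    refine add_le_add_left ?_ _
    refine mul_le_mul_of_nonneg_left ?_ ?_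
    · exact ENNReal.log_monotone (measure_mono hsub)
    · exact EReal.coe_nonneg.mpr (by positivity)
  · isBoundedDefault
  · isBoundedDefault
end
end

section
/- Let A', A'' be unital C*-algebras and let B ⊆ A'⊕A'' be a unital C*-subalgebra (containing the unit (1,1)), with π' : B → A' and π'' : B → A'' the restrictions of the coordinate projections. If τ is an extreme point of the set TS(B) of tracial states of B, then either τ = σ'∘π' for some tracial state σ' on the C*-algebra π'(B), or τ = σ''∘π'' for some tracial state σ'' on the C*-algebra π''(B). -/
open scoped ComplexOrder
open Matrix MeasureTheory Filter
open scoped ENNReal NNReal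
noncomputable section

namespace ETA

open CStarAlgebra

variable {C : Type*} [CStarAlgebra C] [PartialOrder C] [StarOrderedRing C]

lemma tau_nonneg (τ : C →ₗ[ℂ] ℂ) (hτ : IsTracialState τ) {a : C} (ha : 0 ≤ a) :
    0 ≤ τ a := by
  rw [StarOrderedRing.nonneg_iff] at ha
  induction ha using AddSubmonoid.closure_induction with
  | mem x hx => obtain ⟨s, rfl⟩ := hx; exact hτ.nonneg s
  | zero => simp
  | add x y _ _ hx hy => rw [_root_.map_add]; exact add_nonneg hx hy

lemma tau_mono (τ : C →ₗ[ℂ] ℂ) (hτ : IsTracialState τ) {a b : C} (hab : a ≤ b) :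
    τ a ≤ τ b := by
  have h := tau_nonneg τ hτ (sub_nonneg.mpr hab)
  rw [_root_.map_sub] at h
  exact sub_nonneg.mp h

lemma tau_real (τ : C →ₗ[ℂ] ℂ) {a : C} (h : 0 ≤ τ a) : τ a = ((τ a).re : ℂ) := by
  rw [Complex.nonneg_iff] at h
  exact Complex.ext (by simp) (by simp [← h.2])

lemma one_nonneg : (0 : C) ≤ 1 := by simpa using star_mul_self_nonneg (1 : C)

lemma le_one_of_norm {e : C} (he : 0 ≤ e) (hn : ‖e‖ ≤ 1) : e ≤ 1 := by
  have h1 := IsSelfAdjoint.le_algebraMap_norm_self (a := e) (.of_nonneg he)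
  refine h1.trans ?_
  rw [Algebra.algebraMap_eq_smul_one]
  calc ‖e‖ • (1 : C) ≤ (1:ℝ) • (1 : C) := by
        refine sub_nonneg.mp ?_
        rw [← sub_smul]
        exact smul_nonneg (by linarith) one_nonneg
    _ = 1 := one_smul _ _

lemma tau_mul_nonneg (τ : C →ₗ[ℂ] ℂ) (hτ : IsTracialState τ) {e x : C}
    (he : 0 ≤ e) (hx : 0 ≤ x) : 0 ≤ τ (e * x) := by
  have hs : CFC.sqrt x * CFC.sqrt x = x := CFC.sqrt_mul_sqrt_self x hx
  have hss : IsSelfAdjoint (CFC.sqrt x) := .of_nonneg (CFC.sqrt_nonneg x)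
  have hx' : e * x = (e * CFC.sqrt x) * CFC.sqrt x := by rw [mul_assoc, hs]
  have h1 : τ (e * x) = τ (CFC.sqrt x * e * CFC.sqrt x) := by
    rw [hx', hτ.mul_comm, ← mul_assoc]
  rw [h1]
  refine tau_nonneg τ hτ ?_
  have := star_left_conjugate_nonneg he (CFC.sqrt x)
  rwa [hss.star_eq] at this

lemma tau_mul_mono_left (τ : C →ₗ[ℂ] ℂ) (hτ : IsTracialState τ) {e f : C}
    (hef : e ≤ f) {x : C} (hx : 0 ≤ x) : τ (e * x) ≤ τ (f * x) := by
  have := tau_mul_nonneg τ hτ (sub_nonneg.mpr hef) hx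
  rw [sub_mul, _root_.map_sub] at this
  exact sub_nonneg.mp this

lemma tau_mul_mono_right (τ : C →ₗ[ℂ] ℂ) (hτ : IsTracialState τ) {e x y : C}
    (he : 0 ≤ e) (hxy : x ≤ y) : τ (e * x) ≤ τ (e * y) := by
  have := tau_mul_nonneg τ hτ he (sub_nonneg.mpr hxy)
  rw [mul_sub, _root_.map_sub] at this
  exact sub_nonneg.mp this

end ETA

namespace ETA

section Lam
open CStarAlgebra
variable {C : Type*} [CStarAlgebra C] [PartialOrder C] [StarOrderedRing C]
variable {D : Type*} [NonUnitalCStarAlgebra D] [PartialOrder D] [StarOrderedRing D]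

lemma psi_nonneg (ψ : C →⋆ₙₐ[ℂ] D) {a : C} (ha : 0 ≤ a) : 0 ≤ ψ a := by
  rw [StarOrderedRing.nonneg_iff] at ha
  induction ha using AddSubmonoid.closure_induction with
  | mem x hx =>
      obtain ⟨s, rfl⟩ := hx
      rw [_root_.map_mul, StarHomClass.map_star]
      exact star_mul_self_nonneg _
  | zero => simp
  | add x y _ _ hx hy => rw [_root_.map_add]; exact add_nonneg hx hy

/-- The index set for the approximate unit of `ker ψ`. -/
abbrev Lam (ψ : C →⋆ₙₐ[ℂ] D) : Type _ := {e : C // ψ e = 0 ∧ 0 ≤ e ∧ ‖e‖ < 1}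

instance (ψ : C →⋆ₙₐ[ℂ] D) : Nonempty (Lam ψ) :=
  ⟨⟨0, _root_.map_zero ψ, le_refl 0, by norm_num⟩⟩

open scoped NNReal in
set_option maxHeartbeats 2000000 in
lemma lam_directed (ψ : C →⋆ₙₐ[ℂ] D) (hψc : Continuous ψ) :
    IsDirected (Lam ψ) (· ≤ ·) := by
  constructor
  rintro ⟨a, haψ, ha₁, ha₂⟩ ⟨b, hbψ, hb₁, hb₂⟩
  let f : ℝ≥0 → ℝ≥0 := fun x => 1 - (1 + x)⁻¹
  let g : ℝ≥0 → ℝ≥0 := fun x => x * (1 - x)⁻¹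
  have key : ∀ x y : C, 0 ≤ x → 0 ≤ y → ‖x‖ < 1 → ‖y‖ < 1 →
      x ≤ cfcₙ f (cfcₙ g x + cfcₙ g y) := by
    rintro x y hx₁ hy₁ hx₂ -
    calc
      x = cfcₙ (f ∘ g) x := by
        conv_lhs => rw [← cfcₙ_id ℝ≥0 x]
        refine cfcₙ_congr (Set.InvOn.one_sub_one_add_inv.1.eqOn.symm.mono fun z hz => ?_)
        exact lt_of_le_of_lt (le_nnnorm_of_mem_quasispectrum hz) hx₂
      _ = cfcₙ f (cfcₙ g x) := by
        rw [cfcₙ_comp f g x ?_ (by simp [f, tsub_self]) ?_ (by simp [g]) hx₁]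
        · fun_prop (disch := intro _ _; positivity)
        · have (z) (hz : z ∈ quasispectrum ℝ≥0 x) : 1 - z ≠ 0 := by
            refine tsub_pos_of_lt ?_ |>.ne'
            exact lt_of_le_of_lt (le_nnnorm_of_mem_quasispectrum hz) hx₂
          fun_prop (disch := assumption)
      _ ≤ cfcₙ f (cfcₙ g x + cfcₙ g y) := by
        have hxy' : cfcₙ g x ≤ cfcₙ g x + cfcₙ g y :=
          le_add_of_nonneg_right cfcₙ_nonneg_of_predicate
        exact CFC.monotoneOn_one_sub_one_add_inv cfcₙ_nonneg_of_predicate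
          (cfcₙ_nonneg_of_predicate.trans hxy') hxy'
  -- membership in the kernel
  have hg0 : g 0 = 0 := by simp [g]
  have hf0 : f 0 = 0 := by simp [f, tsub_self]
  have hmem : ∀ x : C, 0 ≤ x → ‖x‖ < 1 → ψ x = 0 → ψ (cfcₙ g x) = 0 := by
    intro x hx₁ hx₂ hxψ
    have hcont : ContinuousOn g (quasispectrum ℝ≥0 x) := by
      have (z) (hz : z ∈ quasispectrum ℝ≥0 x) : 1 - z ≠ 0 := by
        refine tsub_pos_of_lt ?_ |>.ne'
        exact lt_of_le_of_lt (le_nnnorm_of_mem_quasispectrum hz) hx₂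
      fun_prop (disch := assumption)
    have := NonUnitalStarAlgHom.map_cfcₙ ψ g x hcont hg0 hψc hx₁
      (by rw [hxψ])
    rw [this, hxψ, cfcₙ_apply_zero]
  have hsum : ψ (cfcₙ g a + cfcₙ g b) = 0 := by
    rw [_root_.map_add, hmem a ha₁ ha₂ haψ, hmem b hb₁ hb₂ hbψ, add_zero]
  have hcψ : ψ (cfcₙ f (cfcₙ g a + cfcₙ g b)) = 0 := by
    have hcont : ContinuousOn f (quasispectrum ℝ≥0 (cfcₙ g a + cfcₙ g b)) := by
      fun_prop (disch := intro _ _; positivity)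
    have := NonUnitalStarAlgHom.map_cfcₙ ψ f (cfcₙ g a + cfcₙ g b) hcont hf0 hψc
      (add_nonneg cfcₙ_nonneg_of_predicate cfcₙ_nonneg_of_predicate) (by rw [hsum])
    rw [this, hsum, cfcₙ_apply_zero]
  refine ⟨⟨cfcₙ f (cfcₙ g a + cfcₙ g b), hcψ, cfcₙ_nonneg_of_predicate,
    norm_cfcₙ_one_sub_one_add_inv_lt_one _⟩, ?_, ?_⟩
  · exact key a b ha₁ hb₁ ha₂ hb₂
  · have := key b a hb₁ ha₁ hb₂ ha₂
    rwa [add_comm (cfcₙ g b) (cfcₙ g a)] at this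

end Lam

end ETA

namespace ETA
section Span
open scoped ComplexStarModule
variable {C : Type*} [CStarAlgebra C] [PartialOrder C] [StarOrderedRing C]
variable {D : Type*} [NonUnitalCStarAlgebra D] [PartialOrder D] [StarOrderedRing D]

lemma real_smul_eq {M : Type*} [AddCommMonoid M] [Module ℝ M] [Module ℂ M]
    [IsScalarTower ℝ ℂ M] (r : ℝ) (z : M) : r • z = ((r : ℂ)) • z := by
  rw [← algebraMap_smul ℂ r z]
  norm_num

lemma psi_posPart_eq_zero (ψ : C →⋆ₙₐ[ℂ] D) (hψc : Continuous ψ) {a : C}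
    (ha : IsSelfAdjoint a) (haψ : ψ a = 0) : ψ (a⁺) = 0 := by
  rw [CFC.posPart_def]
  have h := NonUnitalStarAlgHom.map_cfcₙ ψ (·⁺ : ℝ → ℝ) a
    (by fun_prop) (by simp) hψc ha (by rw [haψ]; exact IsSelfAdjoint.zero D)
  rw [h, haψ, cfcₙ_apply_zero]

lemma psi_negPart_eq_zero (ψ : C →⋆ₙₐ[ℂ] D) (hψc : Continuous ψ) {a : C}
    (ha : IsSelfAdjoint a) (haψ : ψ a = 0) : ψ (a⁻) = 0 := by
  rw [CFC.negPart_def]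
  have h := NonUnitalStarAlgHom.map_cfcₙ ψ (·⁻ : ℝ → ℝ) a
    (by fun_prop) (by simp) hψc ha (by rw [haψ]; exact IsSelfAdjoint.zero D)
  rw [h, haψ, cfcₙ_apply_zero]

lemma psi_realPart (ψ : C →⋆ₙₐ[ℂ] D) {x : C} (hxψ : ψ x = 0) : ψ (ℜ x : C) = 0 := by
  rw [realPart_apply_coe, real_smul_eq, _root_.map_smul, _root_.map_add, StarHomClass.map_star, hxψ]
  simp

lemma psi_imagPart (ψ : C →⋆ₙₐ[ℂ] D) {x : C} (hxψ : ψ x = 0) : ψ (ℑ x : C) = 0 := by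
  rw [imaginaryPart_apply_coe, real_smul_eq, _root_.map_smul, _root_.map_smul, _root_.map_sub, StarHomClass.map_star, hxψ]
  simp

lemma span_pos (ψ : C →⋆ₙₐ[ℂ] D) (hψc : Continuous ψ) (x : C) :
    ∃ p₁ p₂ p₃ p₄ : C, 0 ≤ p₁ ∧ 0 ≤ p₂ ∧ 0 ≤ p₃ ∧ 0 ≤ p₄ ∧
      x = p₁ - p₂ + Complex.I • (p₃ - p₄) ∧
      (ψ x = 0 → ψ p₁ = 0 ∧ ψ p₂ = 0 ∧ ψ p₃ = 0 ∧ ψ p₄ = 0) := by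
  refine ⟨(ℜ x : C)⁺, (ℜ x : C)⁻, (ℑ x : C)⁺, (ℑ x : C)⁻,
    CFC.posPart_nonneg _, CFC.negPart_nonneg _, CFC.posPart_nonneg _, CFC.negPart_nonneg _,
    ?_, ?_⟩
  · rw [CFC.posPart_sub_negPart _ (ℜ x).2, CFC.posPart_sub_negPart _ (ℑ x).2,
      realPart_add_I_smul_imaginaryPart]
  · intro hxψ
    exact ⟨psi_posPart_eq_zero ψ hψc (ℜ x).2 (psi_realPart ψ hxψ),
      psi_negPart_eq_zero ψ hψc (ℜ x).2 (psi_realPart ψ hxψ),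
      psi_posPart_eq_zero ψ hψc (ℑ x).2 (psi_imagPart ψ hxψ),
      psi_negPart_eq_zero ψ hψc (ℑ x).2 (psi_imagPart ψ hxψ)⟩

end Span
end ETA

namespace ETA
section Approx
variable {C : Type*} [CStarAlgebra C] [PartialOrder C] [StarOrderedRing C]
variable {D : Type*} [NonUnitalCStarAlgebra D] [PartialOrder D] [StarOrderedRing D]

lemma nontrivial_of_trace (τ : C →ₗ[ℂ] ℂ) (hτ : IsTracialState τ) : Nontrivial C := by
  refine ⟨1, 0, fun h => ?_⟩
  have : τ 1 = τ 0 := by rw [h]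
  rw [hτ.map_one, _root_.map_zero] at this
  exact one_ne_zero this

lemma tau_algebraMap (τ : C →ₗ[ℂ] ℂ) (hτ : IsTracialState τ) (r : ℝ) :
    τ (algebraMap ℝ C r) = (r : ℂ) := by
  have : algebraMap ℝ C r = (r : ℂ) • (1 : C) := by
    rw [Algebra.algebraMap_eq_smul_one, real_smul_eq]
  rw [this, _root_.map_smul, hτ.map_one, smul_eq_mul, mul_one]

lemma approx_unit (ψ : C →⋆ₙₐ[ℂ] D) (τ : C →ₗ[ℂ] ℂ) (hτ : IsTracialState τ)
    {j : C} (hj : 0 ≤ j) (hjψ : ψ j = 0) {ε : ℝ} (hε : 0 < ε) :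
    ∃ e : Lam ψ, (τ j).re ≤ (τ (e.val * j)).re + ε := by
  haveI : Nontrivial C := nontrivial_of_trace τ hτ
  set fε : ℝ → ℝ := fun t => t / (t + ε) with hfε
  have hsp : ∀ t ∈ spectrum ℝ j, 0 ≤ t := fun t ht => spectrum_nonneg_of_nonneg hj ht
  have hcont : ContinuousOn fε (spectrum ℝ j) := by
    apply ContinuousOn.div continuousOn_id (by fun_prop)
    intro t ht
    have := hsp t ht
    positivity
  have he0 : (0:C) ≤ cfc fε j := cfc_nonneg (fun t ht => by have := hsp t ht; positivity)
  have hnorm : ‖cfc fε j‖ < 1 := by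
    have hM : ‖cfc fε j‖ ≤ ‖j‖ / (‖j‖ + ε) := by
      apply norm_cfc_le (by positivity)
      intro t ht
      have ht0 := hsp t ht
      have htle : t ≤ ‖j‖ := by
        have := spectrum.norm_le_norm_of_mem ht
        rwa [Real.norm_eq_abs, abs_of_nonneg ht0] at this
      rw [Real.norm_eq_abs, hfε, abs_of_nonneg (by positivity)]
      rw [div_le_div_iff₀ (by positivity) (by positivity)]
      nlinarith
    exact lt_of_le_of_lt hM (div_lt_one (by positivity) |>.mpr (by linarith))
  have hidj : cfc (fun t : ℝ => t) j = j := cfc_id' ℝ j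
  have hmm : cfc (fun t => fε t * t) j = cfc fε j * cfc (fun t : ℝ => t) j :=
    cfc_mul fε (fun t => t) j hcont continuousOn_id
  have hmulj : cfc fε j * j = cfc (fun t => fε t * t) j := by rw [hmm, hidj]
  have hsmul : ε • cfc fε j = cfc (fun t => ε * fε t) j := by
    rw [← cfc_smul ε fε j hcont]
    simp [smul_eq_mul]
  have hid : ∀ t ∈ spectrum ℝ j, fε t * t + ε * fε t = t := by
    intro t ht
    have ht0 := hsp t ht
    have : t + ε ≠ 0 := by positivity
    simp only [hfε]
    rw [div_mul_eq_mul_div, mul_div_assoc', ← add_div, div_eq_iff this]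
    ring
  have hkey : cfc fε j * j + ε • cfc fε j = j := by
    rw [hmulj, hsmul]
    calc cfc (fun t => fε t * t) j + cfc (fun t => ε * fε t) j
        = cfc (fun t => fε t * t + ε * fε t) j :=
          (cfc_add j _ _ (hcont.mul continuousOn_id) (continuousOn_const.mul hcont)).symm
      _ = cfc (fun t : ℝ => t) j := cfc_congr hid
      _ = j := hidj
  have hψe : ψ (cfc fε j) = 0 := by
    have h2 : ε • cfc fε j = j - cfc fε j * j := eq_sub_of_add_eq' hkey
    have h3 : ψ (ε • cfc fε j) = ψ j - ψ (cfc fε j) * ψ j := by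
      rw [h2, _root_.map_sub, _root_.map_mul]
    rw [hjψ, mul_zero, sub_zero] at h3
    have h4 : (ε : ℂ) • ψ (cfc fε j) = 0 := by
      rw [← _root_.map_smul, ← real_smul_eq, h3]
    rcases smul_eq_zero.mp h4 with h | h
    · exact absurd (by exact_mod_cast h) hε.ne'
    · exact h
  have hsub : j - cfc fε j * j ≤ algebraMap ℝ C ε := by
    have h1 : j - cfc fε j * j = cfc (fun t => t - fε t * t) j := by
      conv_lhs => rw [hmulj]
      calc j - cfc (fun t => fε t * t) j
          = cfc (fun t : ℝ => t) j - cfc (fun t => fε t * t) j := by rw [hidj]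
        _ = cfc (fun t => t - fε t * t) j :=
            (cfc_sub _ _ j continuousOn_id (hcont.mul continuousOn_id)).symm
    rw [h1, ← cfc_const ε j]
    apply cfc_mono
    · intro t ht
      have ht0 := hsp t ht
      have htε : t + ε ≠ 0 := by positivity
      have heq : t - fε t * t = ε * t / (t + ε) := by simp only [hfε]; rw [eq_div_iff htε, div_mul_eq_mul_div, sub_mul, div_mul_cancel₀ _ htε]; ring
      rw [heq, div_le_iff₀ (by positivity)]
      nlinarith
    · exact continuousOn_id.sub (hcont.mul continuousOn_id)
    · exact continuousOn_const
  have htau : τ (j - cfc fε j * j) ≤ (ε : ℂ) := by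
    have := tau_mono τ hτ hsub
    rwa [tau_algebraMap τ hτ] at this
  rw [_root_.map_sub] at htau
  have hre := (Complex.le_def.mp htau).1
  simp only [Complex.sub_re, Complex.ofReal_re] at hre
  exact ⟨⟨cfc fε j, hψe, he0, hnorm⟩, by linarith⟩

end Approx
end ETA

namespace ETA
section Unitary
open scoped ComplexStarModule
variable {C : Type*} [CStarAlgebra C] [PartialOrder C] [StarOrderedRing C]

lemma sa_decomp_unitary [Nontrivial C] (y : C) (hy : IsSelfAdjoint y) :
    ∃ (c : ℝ) (u : C), star u * u = 1 ∧ u * star u = 1 ∧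
      y = (c : ℂ) • u + (c : ℂ) • star u := by
  by_cases hy0 : y = 0
  · exact ⟨0, 1, by simp, by simp, by simp [hy0]⟩
  have hny : ‖y‖ ≠ 0 := norm_ne_zero_iff.mpr hy0
  set z : C := ‖y‖⁻¹ • y with hzdef
  have hz : IsSelfAdjoint z := by
    rw [hzdef, real_smul_eq, _root_.IsSelfAdjoint, star_smul, Complex.star_def, Complex.conj_ofReal,
      hy.star_eq]
  have hznorm : ‖z‖ = 1 := by
    rw [hzdef, norm_smul, norm_inv, norm_norm, inv_mul_cancel₀ hny]
  haveI hzn : IsStarNormal z := hz.isStarNormal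
  set fu : ℂ → ℂ := fun w => (w.re : ℂ) + Complex.I * (Real.sqrt (1 - w.re ^ 2) : ℝ) with hfu
  have hcont : Continuous fu := by fun_prop
  set u : C := cfc fu z with hu
  have hsp : ∀ w ∈ spectrum ℂ z, w = (w.re : ℂ) ∧ 1 - w.re ^ 2 ≥ 0 := by
    intro w hw
    have h1 : w = (w.re : ℂ) := hz.mem_spectrum_eq_re hw
    have h2 : ‖w‖ ≤ 1 := hznorm ▸ spectrum.norm_le_norm_of_mem hw
    refine ⟨h1, ?_⟩
    have : |w.re| ≤ 1 := by
      have h3 : ‖((w.re:ℝ):ℂ)‖ = |w.re| := by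
        rw [Complex.norm_real, Real.norm_eq_abs]
      calc |w.re| = ‖((w.re:ℝ):ℂ)‖ := h3.symm
        _ = ‖w‖ := by rw [← h1]
        _ ≤ 1 := h2
    nlinarith [sq_abs w.re, abs_nonneg w.re]
  have hstaru : star u = cfc (fun w => star (fu w)) z := (cfc_star fu z).symm
  have hprod : ∀ w ∈ spectrum ℂ z, star (fu w) * fu w = 1 := by
    intro w hw
    obtain ⟨h1, h2⟩ := hsp w hw
    set t := w.re
    set s := Real.sqrt (1 - t ^ 2) with hs
    have hs2 : (s:ℝ) ^ 2 = 1 - t ^ 2 := Real.sq_sqrt h2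
    have hstar : star (fu w) = (t : ℂ) - Complex.I * (s : ℂ) := by
      simp [hfu, Complex.ext_iff]
      exact ⟨rfl, rfl⟩
    rw [hstar]
    have expand : ((t:ℂ) - Complex.I * s) * ((t:ℂ) + Complex.I * s)
        = (t:ℂ)^2 - Complex.I^2 * (s:ℂ)^2 := by ring
    rw [hfu, expand, Complex.I_sq]
    have : (t:ℝ)^2 + s^2 = 1 := by rw [hs2]; ring
    calc (t:ℂ)^2 - (-1) * (s:ℂ)^2 = (((t:ℝ)^2 + s^2 : ℝ) : ℂ) := by push_cast; ring
      _ = 1 := by rw [this]; norm_num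
  have hcfc_one : cfc (fun _ : ℂ => (1:ℂ)) z = 1 := by
    rw [cfc_const 1 z]; simp
  have hu1 : star u * u = 1 := by
    rw [hu, hstaru, ← cfc_mul _ _ z (hcont.star.continuousOn) hcont.continuousOn]
    rw [← hcfc_one]
    exact cfc_congr hprod
  have hu2 : u * star u = 1 := by
    rw [hu, hstaru, ← cfc_mul _ _ z hcont.continuousOn (hcont.star.continuousOn)]
    rw [← hcfc_one]
    refine cfc_congr fun w hw => ?_
    rw [mul_comm]
    exact hprod w hw
  have hsum : u + star u = (2 : ℂ) • z := by
    rw [hu, hstaru, ← cfc_add z _ _ hcont.continuousOn hcont.star.continuousOn]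
    have : cfc (fun w : ℂ => (2:ℂ) • w) z = (2:ℂ) • z := cfc_smul_id (2:ℂ) z
    rw [← this]
    refine cfc_congr fun w hw => ?_
    obtain ⟨h1, -⟩ := hsp w hw
    rw [h1]
    simp only [hfu, smul_eq_mul, star_add, StarMul.star_mul, Complex.star_def, Complex.conj_ofReal,
      Complex.conj_I, Complex.ofReal_re]
    ring
  refine ⟨‖y‖ / 2, u, hu1, hu2, ?_⟩
  rw [← smul_add, hsum, smul_smul, hzdef, real_smul_eq, smul_smul]
  rw [show ((‖y‖ / 2 : ℝ) : ℂ) * 2 * ((‖y‖⁻¹ : ℝ) : ℂ) = (((‖y‖ / 2 * 2 * ‖y‖⁻¹ : ℝ)) : ℂ) by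
    push_cast; ring]
  rw [show ‖y‖ / 2 * 2 * ‖y‖⁻¹ = 1 by field_simp]
  simp

lemma trace_of_unitary_invariance [Nontrivial C] (φ : C →ₗ[ℂ] ℂ)
    (hinv : ∀ u : C, star u * u = 1 → u * star u = 1 → ∀ x : C, φ (star u * x * u) = φ x) :
    ∀ x y : C, φ (x * y) = φ (y * x) := by
  have hcomm_u : ∀ u : C, star u * u = 1 → u * star u = 1 → ∀ x : C,
      φ (x * u) = φ (u * x) := by
    intro u hu1 hu2 x
    have := hinv u hu1 hu2 (u * x)
    rwa [show star u * (u * x) * u = x * u by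
      rw [← mul_assoc, hu1, one_mul]] at this
  have hsa : ∀ x y : C, IsSelfAdjoint y → φ (x * y) = φ (y * x) := by
    intro x y hy
    obtain ⟨c, u, hu1, hu2, rfl⟩ := sa_decomp_unitary y hy
    have hu1' : star (star u) * star u = 1 := by rwa [star_star]
    have hu2' : star (star u) * star u = 1 := by rwa [star_star]
    have hu3' : star u * star (star u) = 1 := by rwa [star_star]
    rw [mul_add, add_mul, mul_smul_comm, mul_smul_comm, smul_mul_assoc, smul_mul_assoc,
      _root_.map_add, _root_.map_add, _root_.map_smul, _root_.map_smul, _root_.map_smul, _root_.map_smul,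
      hcomm_u u hu1 hu2 x, hcomm_u (star u) hu1' hu3' x]
  intro x y
  have hdecomp : y = (ℜ y : C) + Complex.I • (ℑ y : C) :=
    (realPart_add_I_smul_imaginaryPart y).symm
  rw [hdecomp]
  rw [mul_add, add_mul, mul_smul_comm, smul_mul_assoc, _root_.map_add, _root_.map_add, _root_.map_smul, _root_.map_smul,
    hsa x _ (ℜ y).2, hsa x _ (ℑ y).2]

end Unitary
end ETA

namespace ETA
section Main
open Filter
variable {C : Type*} [CStarAlgebra C] [PartialOrder C] [StarOrderedRing C]
variable {D : Type*} [NonUnitalCStarAlgebra D] [PartialOrder D] [StarOrderedRing D]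

lemma cx_real {w : ℂ} (h : 0 ≤ w) : w = ((w.re : ℝ) : ℂ) := by
  rw [Complex.nonneg_iff] at h
  exact Complex.ext (by simp) (by simp [← h.2])

lemma cx_ofReal_nonneg {r : ℝ} (h : 0 ≤ r) : 0 ≤ (r : ℂ) := by
  rw [Complex.nonneg_iff]; simp [h]

theorem tracial_kernel_dichotomy (τ : C →ₗ[ℂ] ℂ)
    (hext : τ ∈ Set.extremePoints ℝ {σ : C →ₗ[ℂ] ℂ | IsTracialState σ})
    (ψ : C →⋆ₙₐ[ℂ] D) (hψc : Continuous ψ)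
    (I : Set C) (hIJ : ∀ i ∈ I, ∀ j : C, ψ j = 0 → j * i = 0) :
    (∀ i ∈ I, τ i = 0) ∨ (∀ j : C, ψ j = 0 → τ j = 0) := by
  rw [mem_extremePoints] at hext
  obtain ⟨hτmem, hextreme⟩ := hext
  have hτ : IsTracialState τ := hτmem
  haveI : Nontrivial C := nontrivial_of_trace τ hτ
  haveI : IsDirected (Lam ψ) (· ≤ ·) := lam_directed ψ hψc
  haveI : (atTop : Filter (Lam ψ)).NeBot := atTop_neBot
  have he_pos : ∀ e : Lam ψ, (0 : C) ≤ e.val := fun e => e.2.2.1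
  have he_le_one : ∀ e : Lam ψ, (e.val : C) ≤ 1 := fun e => le_one_of_norm e.2.2.1 e.2.2.2.le
  have hmono : ∀ {x : C}, 0 ≤ x → Monotone (fun e : Lam ψ => (τ (e.val * x)).re) := by
    intro x hx e₁ e₂ h12
    exact (Complex.le_def.mp (tau_mul_mono_left τ hτ h12 hx)).1
  have hbddA : ∀ {x : C}, 0 ≤ x → BddAbove (Set.range fun e : Lam ψ => (τ (e.val * x)).re) := by
    intro x hx
    refine ⟨(τ x).re, ?_⟩
    rintro - ⟨e, rfl⟩
    have := tau_mul_mono_left τ hτ (he_le_one e) hx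
    rw [one_mul] at this
    exact (Complex.le_def.mp this).1
  have htendsto_pos : ∀ {x : C}, 0 ≤ x →
      Tendsto (fun e : Lam ψ => τ (e.val * x)) atTop
        (nhds (((⨆ e : Lam ψ, (τ (e.val * x)).re : ℝ) : ℂ))) := by
    intro x hx
    have h1 := tendsto_atTop_ciSup (hmono hx) (hbddA hx)
    have h3 := (Complex.continuous_ofReal.tendsto _).comp h1
    refine h3.congr fun e => ?_
    exact (cx_real (tau_mul_nonneg τ hτ (he_pos e) hx)).symm
  have key : ∀ x : C, ∃ L : ℂ, Tendsto (fun e : Lam ψ => τ (e.val * x)) atTop (nhds L) := by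
    intro x
    obtain ⟨p₁, p₂, p₃, p₄, h₁, h₂, h₃, h₄, hxeq, -⟩ := span_pos ψ hψc x
    refine ⟨_, Tendsto.congr (f₁ := fun e : Lam ψ =>
        (τ (e.val * p₁) - τ (e.val * p₂)) + Complex.I * (τ (e.val * p₃) - τ (e.val * p₄)))
      (fun e => ?_)
      (((htendsto_pos h₁).sub (htendsto_pos h₂)).add
        ((((htendsto_pos h₃).sub (htendsto_pos h₄))).const_mul Complex.I))⟩
    rw [hxeq]
    rw [mul_add, mul_sub (e.val : C) p₁ p₂, mul_smul_comm, mul_sub (e.val : C) p₃ p₄, _root_.map_add, _root_.map_sub, _root_.map_smul, _root_.map_sub,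
      smul_eq_mul]
  obtain ⟨φ, hφ⟩ : ∃ φ : C →ₗ[ℂ] ℂ,
      ∀ x, Tendsto (fun e : Lam ψ => τ (e.val * x)) atTop (nhds (φ x)) := by
    choose L hL using key
    refine ⟨⟨⟨L, fun x y => ?_⟩, fun c x => ?_⟩, hL⟩
    · refine tendsto_nhds_unique (hL (x + y)) (Tendsto.congr (fun e => ?_) ((hL x).add (hL y)))
      rw [mul_add, _root_.map_add]
    · refine tendsto_nhds_unique (hL (c • x)) (Tendsto.congr (fun e => ?_) ((hL x).const_mul c))
      rw [mul_smul_comm, _root_.map_smul, smul_eq_mul]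
  have hφ_pos : ∀ {x : C}, 0 ≤ x → 0 ≤ φ x := fun {x} hx =>
    ge_of_tendsto' (hφ x) fun e => tau_mul_nonneg τ hτ (he_pos e) hx
  have hφ_le : ∀ {x : C}, 0 ≤ x → φ x ≤ τ x := by
    intro x hx
    refine le_of_tendsto' (hφ x) fun e => ?_
    have := tau_mul_mono_left τ hτ (he_le_one e) hx
    rwa [one_mul] at this
  have hφ_sup : ∀ {x : C}, 0 ≤ x →
      φ x = (((⨆ e : Lam ψ, (τ (e.val * x)).re : ℝ)) : ℂ) := fun {x} hx =>
    tendsto_nhds_unique (hφ x) (htendsto_pos hx)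
  have hφI : ∀ i ∈ I, φ i = 0 := by
    intro i hi
    refine tendsto_nhds_unique (hφ i) ?_
    have h0 : (fun e : Lam ψ => τ (e.val * i)) = fun _ => 0 :=
      funext fun e => by rw [hIJ i hi e.val e.2.1, _root_.map_zero]
    rw [h0]
    exact tendsto_const_nhds
  have hφJpos : ∀ {j : C}, 0 ≤ j → ψ j = 0 → φ j = τ j := by
    intro j hj hjψ
    have h1 : φ j ≤ τ j := hφ_le hj
    have h2 : (τ j).re ≤ (φ j).re := by
      by_contra hcon
      push_neg at hcon
      obtain ⟨e, he⟩ := approx_unit ψ τ hτ hj hjψ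
        (show (0:ℝ) < ((τ j).re - (φ j).re) / 2 by linarith)
      have h3 : (τ (e.val * j)).re ≤ (φ j).re := by
        rw [hφ_sup hj, Complex.ofReal_re]
        exact le_ciSup (hbddA hj) e
      linarith
    rw [cx_real (hφ_pos hj), cx_real (tau_nonneg τ hτ hj),
      le_antisymm (Complex.le_def.mp h1).1 h2]
  have hφJ : ∀ j : C, ψ j = 0 → φ j = τ j := by
    intro j hjψ
    obtain ⟨p₁, p₂, p₃, p₄, h₁, h₂, h₃, h₄, hxeq, hψp⟩ := span_pos ψ hψc j
    obtain ⟨q₁, q₂, q₃, q₄⟩ := hψp hjψ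
    rw [hxeq]
    simp only [_root_.map_add, _root_.map_sub, _root_.map_smul]
    rw [hφJpos h₁ q₁, hφJpos h₂ q₂, hφJpos h₃ q₃, hφJpos h₄ q₄]
  -- flatness: a linear functional nonneg on positives vanishing at 1 is zero
  have hflat : ∀ θ : C →ₗ[ℂ] ℂ, (∀ {x : C}, 0 ≤ x → 0 ≤ θ x) → θ 1 = 0 → ∀ x, θ x = 0 := by
    intro θ hθpos hθ1
    have hθz : ∀ {x : C}, 0 ≤ x → θ x = 0 := by
      intro x hx
      have hle : x ≤ algebraMap ℝ C ‖x‖ := IsSelfAdjoint.le_algebraMap_norm_self (.of_nonneg hx)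
      have h1 : 0 ≤ θ (algebraMap ℝ C ‖x‖) - θ x := by
        have := hθpos (sub_nonneg.mpr hle)
        rwa [_root_.map_sub] at this
      have h2 : θ (algebraMap ℝ C ‖x‖) = 0 := by
        rw [show (algebraMap ℝ C ‖x‖ : C) = (‖x‖ : ℂ) • 1 by
          rw [Algebra.algebraMap_eq_smul_one, real_smul_eq], _root_.map_smul, hθ1, smul_zero]
      rw [h2, zero_sub] at h1
      exact le_antisymm (by simpa using neg_nonneg.mp (by simpa using h1)) (hθpos hx)
    intro x
    obtain ⟨p₁, p₂, p₃, p₄, h₁, h₂, h₃, h₄, hxeq, -⟩ := span_pos ψ hψc x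
    rw [hxeq, _root_.map_add, _root_.map_sub, _root_.map_smul, _root_.map_sub,
      hθz h₁, hθz h₂, hθz h₃, hθz h₄]
    simp
  -- unitary invariance of φ
  have hφinv : ∀ u : C, star u * u = 1 → u * star u = 1 →
      ∀ x : C, φ (star u * x * u) = φ x := by
    have hone : ∀ v : C, star v * v = 1 → v * star v = 1 → ‖v‖ = 1 → ∀ {x : C}, 0 ≤ x →
        (φ (star v * x * v)).re ≤ (φ x).re := by
      intro v hv1 hv2 hnv x hx
      have hconj_pos : 0 ≤ star v * x * v := star_left_conjugate_nonneg hx v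
      rw [hφ_sup hconj_pos, hφ_sup hx, Complex.ofReal_re, Complex.ofReal_re]
      refine ciSup_le fun e => ?_
      have hEmem1 : ψ (v * e.val * star v) = 0 := by
        rw [_root_.map_mul, _root_.map_mul, e.2.1, mul_zero, zero_mul]
      have hEmem2 : (0:C) ≤ v * e.val * star v := by
        have := star_left_conjugate_nonneg (he_pos e) (star v)
        rwa [star_star] at this
      have hEmem3 : ‖v * e.val * star v‖ < 1 := by
        calc ‖v * e.val * star v‖ ≤ ‖v * e.val‖ * ‖star v‖ := norm_mul_le _ _
          _ ≤ ‖v‖ * ‖e.val‖ * ‖star v‖ := by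
              gcongr; exact norm_mul_le _ _
          _ = ‖e.val‖ := by rw [norm_star, hnv]; ring
          _ < 1 := e.2.2.2
      have htr : τ (e.val * (star v * x * v)) = τ ((v * e.val * star v) * x) := by
        calc τ (e.val * (star v * x * v)) = τ ((e.val * star v * x) * v) := by
              rw [mul_assoc, mul_assoc, mul_assoc]
          _ = τ (v * (e.val * star v * x)) := hτ.mul_comm _ _
          _ = τ ((v * e.val * star v) * x) := by rw [← mul_assoc, ← mul_assoc]
      calc (τ (e.val * (star v * x * v))).re
          = (τ ((⟨v * e.val * star v, hEmem1, hEmem2, hEmem3⟩ : Lam ψ).val * x)).re := by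
            rw [htr]
        _ ≤ ⨆ e' : Lam ψ, (τ (e'.val * x)).re := le_ciSup (hbddA hx) _
    intro u hu1 hu2
    have hnu : ‖u‖ = 1 := by
      have h := CStarRing.norm_star_mul_self (x := u)
      rw [hu1, norm_one] at h
      nlinarith [norm_nonneg u]
    have heq_pos : ∀ {x : C}, 0 ≤ x → φ (star u * x * u) = φ x := by
      intro x hx
      have ha := hone u hu1 hu2 hnu hx
      have hnu' : ‖star u‖ = 1 := by rw [norm_star, hnu]
      have hb := hone (star u) (by rwa [star_star]) (by rwa [star_star]) hnu'
        (star_left_conjugate_nonneg hx u)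
      have hsimp : star (star u) * (star u * x * u) * star u = x := by
        rw [star_star, show u * (star u * x * u) * star u = (u * star u) * x * (u * star u) by
          simp only [mul_assoc], hu2, one_mul, mul_one]
      rw [hsimp] at hb
      rw [cx_real (hφ_pos (star_left_conjugate_nonneg hx u)), cx_real (hφ_pos hx),
        le_antisymm ha hb]
    intro x
    obtain ⟨p₁, p₂, p₃, p₄, h₁, h₂, h₃, h₄, hxeq, -⟩ := span_pos ψ hψc x
    have hexpand : star u * x * u
        = (star u * p₁ * u - star u * p₂ * u)
          + Complex.I • (star u * p₃ * u - star u * p₄ * u) := by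
      rw [hxeq]
      rw [mul_add, mul_smul_comm, add_mul, smul_mul_assoc, mul_sub, sub_mul, mul_sub, sub_mul]
    rw [hexpand, hxeq]
    simp only [_root_.map_add, _root_.map_sub, _root_.map_smul]
    rw [heq_pos h₁, heq_pos h₂, heq_pos h₃, heq_pos h₄]
  have hφtr : ∀ x y : C, φ (x * y) = φ (y * x) := trace_of_unitary_invariance φ hφinv
  -- the value at one
  have h0φ1 : 0 ≤ φ 1 := hφ_pos one_nonneg
  have hφ1le : φ 1 ≤ 1 := by
    have := hφ_le one_nonneg
    rwa [hτ.map_one] at this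
  set r : ℝ := (φ 1).re with hrdef
  have hφ1 : φ 1 = (r : ℂ) := cx_real h0φ1
  have hr0 : 0 ≤ r := (Complex.le_def.mp h0φ1).1
  have hr1 : r ≤ 1 := by
    have := (Complex.le_def.mp hφ1le).1
    simpa using this
  by_cases hcase : r = 0
  · right
    intro j hjψ
    have hzero : ∀ {x : C}, 0 ≤ x → φ x = 0 := by
      intro x hx
      refine hflat φ (fun {y} hy => hφ_pos hy) ?_ x
      rw [hφ1, hcase, Complex.ofReal_zero]
    rw [← hφJ j hjψ]
    obtain ⟨p₁, p₂, p₃, p₄, h₁, h₂, h₃, h₄, hxeq, -⟩ := span_pos ψ hψc j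
    rw [hxeq, _root_.map_add, _root_.map_sub, _root_.map_smul, _root_.map_sub,
      hzero h₁, hzero h₂, hzero h₃, hzero h₄]
    simp
  · left
    by_cases hcase1 : r = 1
    · intro i hi
      have hχ : ∀ x, (τ - φ) x = 0 := by
        refine hflat (τ - φ) (fun {y} hy => ?_) ?_
        · rw [LinearMap.sub_apply]
          exact sub_nonneg.mpr (hφ_le hy)
        · rw [LinearMap.sub_apply, hτ.map_one, hφ1, hcase1, Complex.ofReal_one, sub_self]
      have := hχ i
      rw [LinearMap.sub_apply, sub_eq_zero] at this
      rw [this, hφI i hi]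
    · have hr0' : 0 < r := lt_of_le_of_ne hr0 (Ne.symm hcase)
      have hr1' : r < 1 := lt_of_le_of_ne hr1 hcase1
      set τ₁ : C →ₗ[ℂ] ℂ := (r⁻¹ : ℝ) • φ with hτ₁def
      set τ₂ : C →ₗ[ℂ] ℂ := ((1 - r)⁻¹ : ℝ) • (τ - φ) with hτ₂def
      have hsmul_apply : ∀ (c : ℝ) (θ : C →ₗ[ℂ] ℂ) (x : C), (c • θ) x = (c : ℂ) * θ x := by
        intro c θ x
        rw [LinearMap.smul_apply, real_smul_eq, smul_eq_mul]
      have hτ₁state : IsTracialState τ₁ := by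
        refine ⟨?_, ?_, ?_⟩
        · rw [hτ₁def, hsmul_apply, hφ1, ← Complex.ofReal_mul, inv_mul_cancel₀ (ne_of_gt hr0'),
            Complex.ofReal_one]
        · intro x
          rw [hτ₁def, hsmul_apply]
          exact mul_nonneg (cx_ofReal_nonneg (inv_nonneg.mpr hr0)) (hφ_pos (star_mul_self_nonneg x))
        · intro x y
          rw [hτ₁def, hsmul_apply, hsmul_apply, hφtr x y]
      have hτ₂state : IsTracialState τ₂ := by
        refine ⟨?_, ?_, ?_⟩
        · rw [hτ₂def, hsmul_apply, LinearMap.sub_apply, hτ.map_one, hφ1,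
            ← Complex.ofReal_one, ← Complex.ofReal_sub, ← Complex.ofReal_mul,
            inv_mul_cancel₀ (by linarith), Complex.ofReal_one]
        · intro x
          rw [hτ₂def, hsmul_apply, LinearMap.sub_apply]
          exact mul_nonneg (cx_ofReal_nonneg (inv_nonneg.mpr (by linarith : (0:ℝ) ≤ 1 - r)))
            (sub_nonneg.mpr (hφ_le (star_mul_self_nonneg x)))
        · intro x y
          rw [hτ₂def, hsmul_apply, hsmul_apply, LinearMap.sub_apply, LinearMap.sub_apply,
            hφtr x y, hτ.mul_comm x y]
      have hseg : τ ∈ openSegment ℝ τ₁ τ₂ := by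
        refine ⟨r, 1 - r, hr0', by linarith, by ring, ?_⟩
        rw [hτ₁def, hτ₂def, smul_smul, smul_smul, mul_inv_cancel₀ (ne_of_gt hr0'),
          mul_inv_cancel₀ (by linarith : (1:ℝ) - r ≠ 0), one_smul, one_smul]
        abel
      have heq := hextreme τ₁ hτ₁state τ₂ hτ₂state hseg
      intro i hi
      have h5 : τ₁ i = τ i := by rw [heq.1]
      rw [← h5, hτ₁def, hsmul_apply, hφI i hi, mul_zero]

end Main
end ETA

namespace ETA
section Factor
variable {A A2 : Type*} [Ring A] [StarRing A] [Algebra ℂ A] [StarModule ℂ A]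
  [Ring A2] [StarRing A2] [Algebra ℂ A2] [StarModule ℂ A2]

lemma factor_through (B : StarSubalgebra ℂ A) (F : A →⋆ₐ[ℂ] A2) (τ : ↥B →ₗ[ℂ] ℂ)
    (hτ : IsTracialState τ) (hker : ∀ x : ↥B, F (x : A) = 0 → τ x = 0) :
    ∃ σ : ↥(B.map F) →ₗ[ℂ] ℂ, IsTracialState σ ∧
      ∀ x : ↥B, τ x = σ ⟨F (x : A), ⟨(x : A), x.2, rfl⟩⟩ := by
  set P := B.map F with hP
  let p' : ↥B →ₗ[ℂ] ↥P :=
    { toFun := fun x => ⟨F (x : A), ⟨(x : A), x.2, rfl⟩⟩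
      map_add' := fun x y => Subtype.ext <| by simp
      map_smul' := fun c x => Subtype.ext <| by simp }
  have hp'val : ∀ x : ↥B, ((p' x : ↥P) : A2) = F (x : A) := fun x => rfl
  have hrange : LinearMap.range p' = ⊤ := by
    rw [LinearMap.range_eq_top]
    rintro ⟨y, hy⟩
    obtain ⟨x, hx, rfl⟩ := (StarSubalgebra.mem_map).mp hy
    exact ⟨⟨x, hx⟩, rfl⟩
  obtain ⟨g, hg⟩ := LinearMap.exists_rightInverse_of_surjective p' hrange
  have hgp : ∀ y : ↥P, p' (g y) = y := fun y => DFunLike.congr_fun hg y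
  have hker' : ∀ z : ↥B, p' z = 0 → τ z = 0 := by
    intro z hz
    refine hker z ?_
    have : ((p' z : ↥P) : A2) = 0 := by rw [hz]; rfl
    rwa [hp'val] at this
  have hdiff : ∀ z w : ↥B, p' z = p' w → τ z = τ w := by
    intro z w h
    have h0 : τ (z - w) = 0 := hker' _ (by rw [_root_.map_sub, h, sub_self])
    rw [_root_.map_sub, sub_eq_zero] at h0
    exact h0
  have hmul : ∀ z w : ↥B, p' (z * w) = p' z * p' w := fun z w => Subtype.ext <| by
    show F ((z * w : ↥B) : A) = F (z : A) * F (w : A)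
    rw [MulMemClass.coe_mul, _root_.map_mul]
  have hstar : ∀ z : ↥B, p' (star z) = star (p' z) := fun z => Subtype.ext <| by
    show F ((star z : ↥B) : A) = star (F (z : A))
    rw [← StarHomClass.map_star]
    congr 1
  have hone : p' (1 : ↥B) = 1 := Subtype.ext <| by
    show F ((1 : ↥B) : A) = 1
    rw [OneMemClass.coe_one, _root_.map_one]
  refine ⟨τ.comp g, ⟨?_, ?_, ?_⟩, ?_⟩
  · have h1 : τ (g 1) = τ 1 := hdiff _ _ (by rw [hgp, hone])
    rw [LinearMap.comp_apply, h1, hτ.map_one]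
  · intro y
    have h2 : τ (g (star y * y)) = τ (star (g y) * g y) := by
      refine hdiff _ _ ?_
      rw [hgp, hmul, hstar, hgp]
    rw [LinearMap.comp_apply, h2]
    exact hτ.nonneg (g y)
  · intro y z
    have h3 : τ (g (y * z)) = τ (g y * g z) := hdiff _ _ (by rw [hgp, hmul, hgp, hgp])
    have h4 : τ (g (z * y)) = τ (g z * g y) := hdiff _ _ (by rw [hgp, hmul, hgp, hgp])
    rw [LinearMap.comp_apply, LinearMap.comp_apply, h3, h4, hτ.mul_comm]
  · intro x
    have h5 : τ (g (p' x)) = τ x := hdiff _ _ (by rw [hgp])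
    exact (h5.symm : _)

end Factor
end ETA

/-- An extreme tracial state of a unital C*-subalgebra `B ⊆ A' ⊕ A''`
factors through one of the two coordinate projections. -/
theorem extreme_tracialState_dirSum {A' A'' : Type*}
    [NormedRing A'] [NormedAlgebra ℂ A'] [StarRing A'] [CStarRing A'] [CompleteSpace A']
    [StarModule ℂ A']
    [NormedRing A''] [NormedAlgebra ℂ A''] [StarRing A''] [CStarRing A''] [CompleteSpace A'']
    [StarModule ℂ A'']
    (B : StarSubalgebra ℂ (A' × A'')) (hB : IsClosed (B : Set (A' × A'')))
    (τ : B →ₗ[ℂ] ℂ)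
    (hτ : τ ∈ Set.extremePoints ℝ {σ : B →ₗ[ℂ] ℂ | IsTracialState σ}) :
    (∃ σ' : (B.map ({ AlgHom.fst ℂ A' A'' with map_star' := fun _ => rfl } :
          (A' × A'') →⋆ₐ[ℂ] A')) →ₗ[ℂ] ℂ,
        IsTracialState σ' ∧
          ∀ x : B, τ x = σ' ⟨(x : A' × A'').1, ⟨(x : A' × A''), x.2, rfl⟩⟩) ∨
    (∃ σ'' : (B.map ({ AlgHom.snd ℂ A' A'' with map_star' := fun _ => rfl } :
          (A' × A'') →⋆ₐ[ℂ] A'')) →ₗ[ℂ] ℂ,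
        IsTracialState σ'' ∧
          ∀ x : B, τ x = σ'' ⟨(x : A' × A'').2, ⟨(x : A' × A''), x.2, rfl⟩⟩) := by
  letI : CStarAlgebra A' := {}
  letI : CStarAlgebra A'' := {}
  haveI : IsClosed ((B : Set (A' × A''))) := hB
  letI : PartialOrder ↥B := CStarAlgebra.spectralOrder _
  letI : StarOrderedRing ↥B := CStarAlgebra.spectralOrderedRing _
  letI : PartialOrder A'' := CStarAlgebra.spectralOrder _
  letI : StarOrderedRing A'' := CStarAlgebra.spectralOrderedRing _
  set ψ : ↥B →⋆ₙₐ[ℂ] A'' :=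
    { toFun := fun x => (x : A' × A'').2
      map_smul' := fun c x => rfl
      map_zero' := rfl
      map_add' := fun x y => rfl
      map_mul' := fun x y => rfl
      map_star' := fun x => rfl } with hψdef
  have hψc : Continuous ψ := continuous_snd.comp continuous_subtype_val
  set I : Set ↥B := {x : ↥B | (x : A' × A'').1 = 0} with hIdef
  have hIJ : ∀ i ∈ I, ∀ j : ↥B, ψ j = 0 → j * i = 0 := by
    intro i hi j hj
    have hi1 : (i : A' × A'').1 = 0 := hi
    have hj2 : (j : A' × A'').2 = 0 := hj
    apply Subtype.ext
    show ((j * i : ↥B) : A' × A'') = 0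
    rw [MulMemClass.coe_mul]
    exact Prod.ext (by simp [hi1]) (by simp [hj2])
  rcases ETA.tracial_kernel_dichotomy τ hτ ψ hψc I hIJ with hkill | hkill
  · left
    exact ETA.factor_through B _ τ hτ.1 (fun x hx => hkill x hx)
  · right
    exact ETA.factor_through B _ τ hτ.1 (fun x hx => hkill x hx)
end
end

section
/- Let A be a unital C*-algebra generated by self-adjoint contractions T₁,…,Tₙ with the universal property that for every unital C*-algebra B and self-adjoint contractions x₁,…,xₙ ∈ B there is a unital *-homomorphism A → B sending T_i to x_i. Then for every noncommutative polynomial P ∈ ℂ⟨X₁,…,Xₙ⟩ and every ε > 0 there exists δ > 0 such that for every unital C*-algebra B and all self-adjoint x₁,…,xₙ ∈ B with ‖x_j‖ ≤ 1 + δ (1 ≤ j ≤ n), one has ‖P(x₁,…,xₙ)‖ < ‖P(T₁,…,Tₙ)‖ + ε. -/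
open scoped ComplexOrder
open Matrix MeasureTheory Filter
open scoped ENNReal NNReal
universe u v
noncomputable section

lemma norm_one_le_cstar {B : Type*} [NormedRing B] [StarRing B] [CStarRing B] : ‖(1:B)‖ ≤ 1 := by
  have h := CStarRing.norm_star_mul_self (x := (1:B))
  simp only [star_one, one_mul] at h
  nlinarith [norm_nonneg (1:B)]

lemma eval_scale_bound {n : ℕ} (P : NCPoly n) :
    ∃ C : ℝ, 0 ≤ C ∧ ∀ (δ : ℝ), 0 < δ → δ ≤ 1 →
      ∀ (B : Type v) [NormedRing B] [NormedAlgebra ℂ B] [StarRing B] [CStarRing B]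
        (x : Fin n → B), (∀ j, ‖x j‖ ≤ 1 + δ) →
        ‖P.eval x‖ ≤ C ∧
        ‖P.eval x - P.eval (fun j => ((((1+δ)⁻¹ : ℝ) : ℂ)) • x j)‖ ≤ C * δ := by
  induction P using FreeAlgebra.induction with
  | grade0 c =>
    refine ⟨‖c‖, norm_nonneg c, fun δ hδ hδ1 B _ _ _ _ x hx => ?_⟩
    constructor
    · show ‖(FreeAlgebra.lift ℂ x) (algebraMap ℂ _ c)‖ ≤ _
      rw [AlgHom.commutes]
      calc ‖algebraMap ℂ B c‖ = ‖c • (1:B)‖ := by rw [Algebra.algebraMap_eq_smul_one]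
        _ ≤ ‖c‖ * ‖(1:B)‖ := by rw [norm_smul]
        _ ≤ ‖c‖ * 1 := by
            exact mul_le_mul_of_nonneg_left norm_one_le_cstar (norm_nonneg c)
        _ = ‖c‖ := mul_one _
    · show ‖(FreeAlgebra.lift ℂ x) (algebraMap ℂ _ c) -
        (FreeAlgebra.lift ℂ _) (algebraMap ℂ _ c)‖ ≤ _
      rw [AlgHom.commutes, AlgHom.commutes, sub_self, norm_zero]
      positivity
  | grade1 i =>
    refine ⟨2, by norm_num, fun δ hδ hδ1 B _ _ _ _ x hx => ?_⟩
    have h1δ : (0:ℝ) < 1 + δ := by linarith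
    constructor
    · show ‖(FreeAlgebra.lift ℂ x) (FreeAlgebra.ι ℂ i)‖ ≤ _
      rw [FreeAlgebra.lift_ι_apply]
      linarith [hx i]
    · show ‖(FreeAlgebra.lift ℂ x) (FreeAlgebra.ι ℂ i) -
        (FreeAlgebra.lift ℂ (fun j => ((((1+δ)⁻¹ : ℝ) : ℂ)) • x j)) (FreeAlgebra.ι ℂ i)‖ ≤ _
      rw [FreeAlgebra.lift_ι_apply, FreeAlgebra.lift_ι_apply]
      have : x i - ((((1+δ)⁻¹ : ℝ) : ℂ)) • x i
          = (((1 - (1+δ)⁻¹ : ℝ) : ℂ)) • x i := by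
        push_cast
        rw [sub_smul, one_smul]
      rw [this, norm_smul]
      have habs : ‖(((1 - (1+δ)⁻¹ : ℝ) : ℂ))‖ = δ / (1+δ) := by
        rw [Complex.norm_real, Real.norm_eq_abs, abs_of_nonneg]
        · field_simp; ring
        · have : (1+δ)⁻¹ ≤ 1 := by
            rw [inv_le_one_iff₀]; right; linarith
          linarith
      rw [habs]
      calc δ / (1+δ) * ‖x i‖ ≤ δ / (1+δ) * (1+δ) := by
            apply mul_le_mul_of_nonneg_left (hx i) (by positivity)
        _ = δ := by field_simp
        _ ≤ 2 * δ := by linarith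
  | mul p q hp hq =>
    obtain ⟨Cp, hCp, hP⟩ := hp
    obtain ⟨Cq, hCq, hQ⟩ := hq
    refine ⟨2 * Cp * Cq + 1, by positivity, fun δ hδ hδ1 B _ _ _ _ x hx => ?_⟩
    have hy : ∀ j, ‖((((1+δ)⁻¹ : ℝ) : ℂ)) • x j‖ ≤ 1 + δ := by
      intro j
      rw [norm_smul, Complex.norm_real, Real.norm_eq_abs, abs_of_nonneg (by positivity)]
      calc (1+δ)⁻¹ * ‖x j‖ ≤ (1+δ)⁻¹ * (1+δ) := by
            apply mul_le_mul_of_nonneg_left (hx j) (by positivity)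
        _ = 1 := by field_simp
        _ ≤ 1 + δ := by linarith
    obtain ⟨hp1, hp2⟩ := hP δ hδ hδ1 B x hx
    obtain ⟨hq1, hq2⟩ := hQ δ hδ hδ1 B x hx
    obtain ⟨hq1', _⟩ := hQ δ hδ hδ1 B (fun j => ((((1+δ)⁻¹ : ℝ) : ℂ)) • x j) hy
    have hmul : ∀ z : Fin n → B, NCPoly.eval (p * q) z = NCPoly.eval p z * NCPoly.eval q z := by
      intro z; exact map_mul (FreeAlgebra.lift ℂ z) p q
    constructor
    · rw [hmul]
      calc ‖NCPoly.eval p x * NCPoly.eval q x‖ ≤ ‖NCPoly.eval p x‖ * ‖NCPoly.eval q x‖ := norm_mul_le _ _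
        _ ≤ Cp * Cq := mul_le_mul hp1 hq1 (norm_nonneg _) hCp
        _ ≤ 2 * Cp * Cq + 1 := by nlinarith
    · rw [hmul, hmul]
      set a := NCPoly.eval p x
      set b := NCPoly.eval q x
      set a' := NCPoly.eval p (fun j => ((((1+δ)⁻¹ : ℝ) : ℂ)) • x j)
      set b' := NCPoly.eval q (fun j => ((((1+δ)⁻¹ : ℝ) : ℂ)) • x j)
      have : a * b - a' * b' = a * (b - b') + (a - a') * b' := by rw [mul_sub, sub_mul]; abel
      rw [this]
      calc ‖a * (b - b') + (a - a') * b'‖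
          ≤ ‖a * (b - b')‖ + ‖(a - a') * b'‖ := norm_add_le _ _
        _ ≤ ‖a‖ * ‖b - b'‖ + ‖a - a'‖ * ‖b'‖ := by
            gcongr <;> exact norm_mul_le _ _
        _ ≤ Cp * (Cq * δ) + (Cp * δ) * Cq := by
            gcongr <;> first | exact hp1 | exact hq2 | exact hp2 | exact hq1'
        _ = 2 * Cp * Cq * δ := by ring
        _ ≤ (2 * Cp * Cq + 1) * δ := by nlinarith
  | add p q hp hq =>
    obtain ⟨Cp, hCp, hP⟩ := hp
    obtain ⟨Cq, hCq, hQ⟩ := hq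
    refine ⟨Cp + Cq, by linarith, fun δ hδ hδ1 B _ _ _ _ x hx => ?_⟩
    obtain ⟨hp1, hp2⟩ := hP δ hδ hδ1 B x hx
    obtain ⟨hq1, hq2⟩ := hQ δ hδ hδ1 B x hx
    have hadd : ∀ z : Fin n → B, NCPoly.eval (p + q) z = NCPoly.eval p z + NCPoly.eval q z := by
      intro z; exact map_add (FreeAlgebra.lift ℂ z) p q
    rw [hadd, hadd]
    constructor
    · calc ‖NCPoly.eval p x + NCPoly.eval q x‖ ≤ ‖NCPoly.eval p x‖ + ‖NCPoly.eval q x‖ := norm_add_le _ _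
        _ ≤ Cp + Cq := by linarith
    · have key : NCPoly.eval p x + NCPoly.eval q x -
          (NCPoly.eval p (fun j => ((((1+δ)⁻¹ : ℝ) : ℂ)) • x j) +
           NCPoly.eval q (fun j => ((((1+δ)⁻¹ : ℝ) : ℂ)) • x j))
          = (NCPoly.eval p x - NCPoly.eval p (fun j => ((((1+δ)⁻¹ : ℝ) : ℂ)) • x j))
            + (NCPoly.eval q x - NCPoly.eval q (fun j => ((((1+δ)⁻¹ : ℝ) : ℂ)) • x j)) := by
        abel
      rw [key]
      refine (norm_add_le _ _).trans ?_
      nlinarith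


/-- For the universal `n`-tuple of self-adjoint contractions `T₁,…,Tₙ`:
for every noncommutative polynomial `P` and `ε > 0` there is `δ > 0` such that any `n`-tuple
of self-adjoint elements of norm at most `1 + δ` in any unital C*-algebra satisfies
`‖P(x₁,…,xₙ)‖ < ‖P(T₁,…,Tₙ)‖ + ε`. -/
theorem universal_contractions_norm_bound {A : Type u} [NormedRing A] [NormedAlgebra ℂ A]
    [StarRing A] [CStarRing A] [CompleteSpace A] [StarModule ℂ A] {n : ℕ}
    (T : Fin n → A) (hsa : ∀ i, IsSelfAdjoint (T i)) (hT : ∀ i, ‖T i‖ ≤ 1)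
    (hgen : (StarAlgebra.adjoin ℂ (Set.range T)).topologicalClosure = ⊤)
    (huniv : ∀ (B : Type v) [NormedRing B] [NormedAlgebra ℂ B] [StarRing B] [CStarRing B]
      [CompleteSpace B] [StarModule ℂ B] (x : Fin n → B),
      (∀ i, IsSelfAdjoint (x i)) → (∀ i, ‖x i‖ ≤ 1) →
      ∃ φ : A →⋆ₐ[ℂ] B, ∀ i, φ (T i) = x i) :
    ∀ (P : NCPoly n) (ε : ℝ), 0 < ε → ∃ δ : ℝ, 0 < δ ∧
      ∀ (B : Type v) [NormedRing B] [NormedAlgebra ℂ B] [StarRing B] [CStarRing B]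
        [CompleteSpace B] [StarModule ℂ B] (x : Fin n → B),
        (∀ j, IsSelfAdjoint (x j)) → (∀ j, ‖x j‖ ≤ 1 + δ) →
        ‖P.eval x‖ < ‖P.eval T‖ + ε := by
  intro P ε hε
  obtain ⟨C, hC, hbound⟩ := eval_scale_bound P
  have hCpos : (0:ℝ) < 2 * (C + 1) := by linarith
  refine ⟨min 1 (ε / (2 * (C + 1))), lt_min one_pos (by positivity), ?_⟩
  intro B _ _ _ _ _ _ x hxsa hxnorm
  set δ : ℝ := min 1 (ε / (2 * (C + 1))) with hδdef
  have hδpos : 0 < δ := lt_min one_pos (by positivity)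
  have hδ1 : δ ≤ 1 := min_le_left _ _
  have hδε : C * δ < ε := by
    have h1 : δ ≤ ε / (2 * (C + 1)) := min_le_right _ _
    have h2 : C * δ ≤ C * (ε / (2 * (C + 1))) := mul_le_mul_of_nonneg_left h1 hC
    have h3 : C * (ε / (2 * (C + 1))) < ε := by
      rw [← mul_div_assoc, div_lt_iff₀ hCpos]
      nlinarith [mul_nonneg hC hε.le]
    linarith
  set y : Fin n → B := fun j => ((((1 + δ)⁻¹ : ℝ) : ℂ)) • x j with hydef
  have h1δ : (0:ℝ) < 1 + δ := by linarith
  have hysa : ∀ j, IsSelfAdjoint (y j) := by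
    intro j
    show star _ = _
    rw [star_smul, Complex.star_def, Complex.conj_ofReal, (hxsa j).star_eq]
  have hynorm : ∀ j, ‖y j‖ ≤ 1 := by
    intro j
    rw [norm_smul, Complex.norm_real, Real.norm_eq_abs, abs_of_nonneg (by positivity)]
    calc (1 + δ)⁻¹ * ‖x j‖ ≤ (1 + δ)⁻¹ * (1 + δ) :=
          mul_le_mul_of_nonneg_left (hxnorm j) (by positivity)
      _ = 1 := by field_simp
  obtain ⟨φ, hφ⟩ := huniv B y hysa hynorm
  have heq : NCPoly.eval P y = φ (NCPoly.eval P T) := by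
    have hcomp : (φ.toAlgHom.comp (FreeAlgebra.lift ℂ T)) = FreeAlgebra.lift ℂ y := by
      apply FreeAlgebra.hom_ext
      funext i
      simp [FreeAlgebra.lift_ι_apply, hφ i]
    show FreeAlgebra.lift ℂ y P = _
    rw [← hcomp]
    rfl
  have hcontr : ‖φ (NCPoly.eval P T)‖ ≤ ‖NCPoly.eval P T‖ := by
    letI : CStarAlgebra A := {}
    letI : CStarAlgebra B := {}
    exact NonUnitalStarAlgHom.norm_apply_le φ _
  obtain ⟨_, h2⟩ := hbound δ hδpos hδ1 B x hxnorm
  have h2' : ‖NCPoly.eval P x - NCPoly.eval P y‖ ≤ C * δ := h2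
  have h3 : ‖NCPoly.eval P x‖ ≤ ‖NCPoly.eval P x - NCPoly.eval P y‖ + ‖NCPoly.eval P y‖ := by
    calc ‖NCPoly.eval P x‖ = ‖(NCPoly.eval P x - NCPoly.eval P y) + NCPoly.eval P y‖ := by
          rw [sub_add_cancel]
      _ ≤ _ := norm_add_le _ _
  rw [heq] at h2' h3
  linarith
end
end
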